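/- arXiv:2007.14111 — 3 statements merged into one kernel-verified Lean document; each statement's English description precedes it below -/
import Mathlib

section
/- The Matula coding M is multiplicative with respect to the natural sum: for all α, β < ε₀, M(α ⊕ β) = M(α) · M(β), where ⊕ is the Hessenberg natural sum. -/
open Ordinal

/-- `ε₀` is the least ordinal `ξ` with `ω ^ ξ = ξ`. -/
noncomputable def eps0 : Ordinal := sInf {ξ : Ordinal | omega0 ^ ξ = ξ}

/-- `M` is the Matula coding of the ordinals below `ε₀`: `M 0 = 1` and
`M (ω^e + b) = p_{M e} · M b` when `ω^e + b` is in Cantor normal form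
(i.e. `b < ω^(e+1)`), where `p_i` is the `i`-th prime with `p₀ = 2`
(here `p_i = Nat.nth Nat.Prime i`). -/
def IsMatula (M : Ordinal → ℕ) : Prop :=
  M 0 = 1 ∧
    ∀ e b : Ordinal, omega0 ^ e + b < eps0 → b < omega0 ^ (e + 1) →
      M (omega0 ^ e + b) = Nat.nth Nat.Prime (M e) * M b

universe u

/-- Natural addition on ordinals (Hessenberg sum), as defined in the older Mathlib
(`Mathlib.SetTheory.Ordinal.NaturalOps`), which has since been removed from Mathlib. -/
noncomputable def Ordinal.nadd (a b : Ordinal.{u}) : Ordinal.{u} :=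
  max (⨆ x : Set.Iio a, Order.succ (Ordinal.nadd x.1 b))
    (⨆ x : Set.Iio b, Order.succ (Ordinal.nadd a x.1))
termination_by (a, b)
decreasing_by all_goals cases x; decreasing_tactic

namespace NaturalOps

infixl:65 " ♯ " => Ordinal.nadd

end NaturalOps

open NaturalOps

theorem nadd_le_iff {a b c : Ordinal.{u}} :
    b ♯ c ≤ a ↔ (∀ b' < b, b' ♯ c < a) ∧ ∀ c' < c, b ♯ c' < a := by
  rw [Ordinal.nadd]
  simp only [max_le_iff, Ordinal.iSup_le_iff, Order.succ_le_iff, Subtype.forall, Set.mem_Iio]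

theorem nadd_lt_nadd_left {b c : Ordinal.{u}} (h : b < c) (a : Ordinal.{u}) : a ♯ b < a ♯ c :=
  (nadd_le_iff.1 (le_refl (a ♯ c))).2 b h

theorem nadd_lt_nadd_right {b c : Ordinal.{u}} (h : b < c) (a : Ordinal.{u}) : b ♯ a < c ♯ a :=
  (nadd_le_iff.1 (le_refl (c ♯ a))).1 b h

theorem nadd_le_nadd_left {b c : Ordinal.{u}} (h : b ≤ c) (a : Ordinal.{u}) : a ♯ b ≤ a ♯ c := by
  rcases h.lt_or_eq with h | rfl
  · exact (nadd_lt_nadd_left h a).le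
  · exact le_rfl

theorem nadd_le_nadd_right {b c : Ordinal.{u}} (h : b ≤ c) (a : Ordinal.{u}) : b ♯ a ≤ c ♯ a := by
  rcases h.lt_or_eq with h | rfl
  · exact (nadd_lt_nadd_right h a).le
  · exact le_rfl

theorem nadd_lt_nadd {a b c d : Ordinal.{u}} (h₁ : a < b) (h₂ : c < d) : a ♯ c < b ♯ d :=
  (nadd_lt_nadd_right h₁ c).trans (nadd_lt_nadd_left h₂ b)

theorem lt_nadd_iff {a b c : Ordinal.{u}} :
    a < b ♯ c ↔ (∃ b' < b, a ≤ b' ♯ c) ∨ ∃ c' < c, a ≤ b ♯ c' := by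
  constructor
  · intro h
    by_contra h'
    push_neg at h'
    exact absurd (nadd_le_iff.2 h') (not_le.2 h)
  · rintro (⟨b', hb', h⟩ | ⟨c', hc', h⟩)
    · exact h.trans_lt (nadd_lt_nadd_right hb' c)
    · exact h.trans_lt (nadd_lt_nadd_left hc' b)

theorem nadd_comm (a b : Ordinal.{u}) : a ♯ b = b ♯ a := by
  induction a using Ordinal.induction generalizing b with
  | h a iha =>
  induction b using Ordinal.induction with
  | h b ihb =>
  apply le_antisymm
  · rw [nadd_le_iff]; constructor
    · intro x hx; rw [iha x hx b]; exact nadd_lt_nadd_left hx b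
    · intro x hx; rw [ihb x hx]; exact nadd_lt_nadd_right hx a
  · rw [nadd_le_iff]; constructor
    · intro x hx; rw [← ihb x hx]; exact nadd_lt_nadd_left hx a
    · intro x hx; rw [← iha x hx b]; exact nadd_lt_nadd_right hx b

@[simp]
theorem zero_nadd (a : Ordinal.{u}) : 0 ♯ a = a := by
  induction a using Ordinal.induction with
  | h a ih =>
  apply le_antisymm
  · rw [nadd_le_iff]; constructor
    · intro x hx; exact absurd hx (not_lt_of_ge (zero_le (a := x)))
    · intro x hx; rw [ih x hx]; exact hx
  · by_contra h
    push_neg at h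
    have := nadd_lt_nadd_left h 0
    rw [ih _ h] at this
    exact lt_irrefl _ this

@[simp]
theorem nadd_zero (a : Ordinal.{u}) : a ♯ 0 = a := by
  rw [nadd_comm, zero_nadd]

theorem add_le_nadd (a b : Ordinal.{u}) : a + b ≤ a ♯ b := by
  induction b using Ordinal.induction with
  | h b ih =>
  have ha : a ≤ a ♯ b := by
    rcases eq_or_ne b 0 with rfl | hb
    · rw [nadd_zero]
    · have := nadd_lt_nadd_left (pos_iff_ne_zero.2 hb) a
      rw [nadd_zero] at this
      exact this.le
  have hc := Ordinal.add_sub_cancel_of_le ha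
  by_contra h
  push_neg at h
  rw [← hc] at h
  have hd : a ♯ b - a < b := (add_lt_add_iff_left a).1 h
  have := (ih _ hd).trans_lt (nadd_lt_nadd_left hd a)
  rw [hc] at this
  exact lt_irrefl _ this

theorem nadd_assoc (a b c : Ordinal.{u}) : a ♯ b ♯ c = a ♯ (b ♯ c) := by
  induction a using Ordinal.induction generalizing b c with
  | h a iha =>
  induction b using Ordinal.induction generalizing c with
  | h b ihb =>
  induction c using Ordinal.induction with
  | h c ihc =>
  apply le_antisymm
  · rw [nadd_le_iff]; constructor
    · intro x hx
      rcases lt_nadd_iff.1 hx with ⟨a', ha', hx'⟩ | ⟨b', hb', hx'⟩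
      · calc x ♯ c ≤ a' ♯ b ♯ c := nadd_le_nadd_right hx' c
          _ = a' ♯ (b ♯ c) := iha a' ha' b c
          _ < a ♯ (b ♯ c) := nadd_lt_nadd_right ha' _
      · calc x ♯ c ≤ a ♯ b' ♯ c := nadd_le_nadd_right hx' c
          _ = a ♯ (b' ♯ c) := ihb b' hb' c
          _ < a ♯ (b ♯ c) := nadd_lt_nadd_left (nadd_lt_nadd_right hb' c) a
    · intro c' hc'
      rw [ihc c' hc']
      exact nadd_lt_nadd_left (nadd_lt_nadd_left hc' b) a
  · rw [nadd_le_iff]; constructor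
    · intro a' ha'
      rw [← iha a' ha' b c]
      exact nadd_lt_nadd_right (nadd_lt_nadd_right ha' b) c
    · intro y hy
      rcases lt_nadd_iff.1 hy with ⟨b', hb', hy'⟩ | ⟨c', hc', hy'⟩
      · calc a ♯ y ≤ a ♯ (b' ♯ c) := nadd_le_nadd_left hy' a
          _ = a ♯ b' ♯ c := (ihb b' hb' c).symm
          _ < a ♯ b ♯ c := nadd_lt_nadd_right (nadd_lt_nadd_left hb' a) c
      · calc a ♯ y ≤ a ♯ (b ♯ c') := nadd_le_nadd_left hy' a
          _ = a ♯ b ♯ c' := (ihc c' hc').symm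
          _ < a ♯ b ♯ c := nadd_lt_nadd_left hc' _

theorem nadd_left_comm (a b c : Ordinal.{u}) : a ♯ (b ♯ c) = b ♯ (a ♯ c) := by
  rw [← nadd_assoc, nadd_comm a b, nadd_assoc]

lemma eps0_fixed : omega0 ^ eps0 = eps0 :=
  csInf_mem (s := {ξ : Ordinal | omega0 ^ ξ = ξ})
    ⟨nfp (omega0 ^ ·) 0, Ordinal.nfp_fp (isNormal_opow one_lt_omega0) 0⟩

/-- If `ω^e ≤ b < ω^(e+1)` then `b - ω^e < b`. -/
lemma matula_sub_lt {e b : Ordinal} (h1 : omega0 ^ e ≤ b) (h2 : b < omega0 ^ (e + 1)) :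
    b - omega0 ^ e < b := by
  have hcancel : omega0 ^ e + (b - omega0 ^ e) = b := Ordinal.add_sub_cancel_of_le h1
  rcases lt_or_ge (b - omega0 ^ e) b with h | h
  · exact h
  have heq : b - omega0 ^ e = b :=
    le_antisymm (le_add_self.trans_eq hcancel) h
  rw [heq] at hcancel
  have : omega0 ^ e * omega0 ≤ b := add_eq_right_iff_mul_omega0_le.1 hcancel
  rw [← opow_succ, ← add_one_eq_succ] at this
  exact absurd h2 (not_lt.2 this)

/-- The key structural package, by induction on the exponent `e`:
closure of `ω^e` under natural addition, absorption `ω^e ♯ b = ω^e + b`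
for `b < ω^(e+1)`, and `a ♯ b < ω^e + b` for `a < ω^e`, `b < ω^(e+1)`. -/
lemma matula_package : ∀ e : Ordinal,
    (∀ a b, a < omega0 ^ e → b < omega0 ^ e → a ♯ b < omega0 ^ e) ∧
    (∀ b, b < omega0 ^ (e + 1) → omega0 ^ e ♯ b = omega0 ^ e + b) ∧
    (∀ a b, a < omega0 ^ e → b < omega0 ^ (e + 1) → a ♯ b < omega0 ^ e + b) := by
  intro e
  induction e using Ordinal.induction with
  | h e IHe =>
  -- Step 1 : closure
  have hC : ∀ a b, a < omega0 ^ e → b < omega0 ^ e → a ♯ b < omega0 ^ e := by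
    rcases Ordinal.zero_or_succ_or_isSuccLimit e with rfl | ⟨e', rfl⟩ | he
    · intro a b ha hb
      rw [opow_zero, Ordinal.lt_one_iff_zero] at ha hb
      subst ha; subst hb
      simp
    · -- successor case
      have he' : e' < Order.succ e' := Order.lt_succ_of_not_isMax (not_isMax e')
      have hA' : ∀ b, b < omega0 ^ (e' + 1) → omega0 ^ e' ♯ b = omega0 ^ e' + b :=
        (IHe e' he').2.1
      have hmlt : ∀ m : ℕ, omega0 ^ e' * m < omega0 ^ (e' + 1) := by
        intro m
        rw [add_one_eq_succ, opow_succ]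
        exact mul_lt_mul_of_pos_left (nat_lt_omega0 m) (opow_pos e' omega0_pos)
      -- multiple absorption
      have hAm : ∀ m : ℕ, ∀ b, b < omega0 ^ (e' + 1) →
          omega0 ^ e' * m ♯ b = omega0 ^ e' * m + b := by
        intro m
        induction m with
        | zero => intro b hb; simp
        | succ m IHm =>
          intro b hb
          have h1 : (omega0 ^ e' * ((m : ℕ) + 1 : ℕ) : Ordinal)
              = omega0 ^ e' + omega0 ^ e' * m := by
            have : ((m : ℕ) + 1 : ℕ) = ((1 + m : ℕ) : ℕ) := by omega
            rw [this]
            push_cast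
            rw [mul_add, mul_one]
          have hsum : omega0 ^ e' * m + b < omega0 ^ (e' + 1) := by
            rw [add_one_eq_succ] at hb ⊢
            rw [add_one_eq_succ] at hmlt
            exact principal_add_omega0_opow _ (hmlt m) hb
          calc omega0 ^ e' * (m + 1 : ℕ) ♯ b
              = (omega0 ^ e' + omega0 ^ e' * m) ♯ b := by rw [h1]
            _ = (omega0 ^ e' ♯ omega0 ^ e' * m) ♯ b := by rw [hA' _ (hmlt m)]
            _ = omega0 ^ e' ♯ (omega0 ^ e' * m ♯ b) := nadd_assoc _ _ _
            _ = omega0 ^ e' ♯ (omega0 ^ e' * m + b) := by rw [IHm b hb]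
            _ = omega0 ^ e' + (omega0 ^ e' * m + b) := hA' _ hsum
            _ = omega0 ^ e' * (m + 1 : ℕ) + b := by rw [← add_assoc, ← h1]
      intro a b ha hb
      have hne : (omega0 ^ e' : Ordinal) ≠ 0 := (opow_pos e' omega0_pos).ne'
      have hdiva : a / omega0 ^ e' < omega0 := by
        rw [Ordinal.div_lt hne]
        rwa [opow_succ] at ha
      have hdivb : b / omega0 ^ e' < omega0 := by
        rw [Ordinal.div_lt hne]
        rwa [opow_succ] at hb
      obtain ⟨m, hm⟩ := Ordinal.lt_omega0.1 hdiva
      obtain ⟨n, hn⟩ := Ordinal.lt_omega0.1 hdivb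
      have ha2 : a < omega0 ^ e' * (m + 1 : ℕ) := by
        have := lt_mul_succ_div a hne
        rwa [hm, ← Ordinal.add_one_eq_succ, ← Nat.cast_succ] at this
      have hb2 : b < omega0 ^ e' * (n + 1 : ℕ) := by
        have := lt_mul_succ_div b hne
        rwa [hn, ← Ordinal.add_one_eq_succ, ← Nat.cast_succ] at this
      have hmlt' : ∀ m : ℕ, omega0 ^ e' * m < omega0 ^ Order.succ e' := by
        intro m; have := hmlt m; rwa [add_one_eq_succ] at this
      calc a ♯ b < omega0 ^ e' * (m + 1 : ℕ) ♯ omega0 ^ e' * (n + 1 : ℕ) :=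
            nadd_lt_nadd ha2 hb2
        _ = omega0 ^ e' * (m + 1 : ℕ) + omega0 ^ e' * (n + 1 : ℕ) := by
            rw [hAm (m + 1) _ (hmlt (n+1))]
        _ = omega0 ^ e' * ((m + 1 : ℕ) + (n + 1 : ℕ) : ℕ) := by
            push_cast; simp [mul_add, mul_one, add_assoc]
        _ < omega0 ^ Order.succ e' := hmlt' _
    · -- limit case
      intro a b ha hb
      obtain ⟨γa, hγa, ha'⟩ := (lt_opow_of_isSuccLimit omega0_ne_zero he).1 ha
      obtain ⟨γb, hγb, hb'⟩ := (lt_opow_of_isSuccLimit omega0_ne_zero he).1 hb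
      set γ := max γa γb with hγ
      have hγe : γ < e := max_lt hγa hγb
      have ha'' : a < omega0 ^ γ :=
        ha'.trans_le (opow_le_opow_right omega0_pos (le_max_left _ _))
      have hb'' : b < omega0 ^ γ :=
        hb'.trans_le (opow_le_opow_right omega0_pos (le_max_right _ _))
      exact ((IHe γ hγe).1 a b ha'' hb'').trans_le
        (opow_le_opow_right omega0_pos hγe.le)
  -- Step 2 : absorption and the `U` bound, by induction on `b`
  have hKey : ∀ b : Ordinal,
      (∀ a, a < omega0 ^ e → b < omega0 ^ (e + 1) → a ♯ b < omega0 ^ e + b) ∧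
      (b < omega0 ^ (e + 1) → omega0 ^ e ♯ b = omega0 ^ e + b) := by
    intro b
    induction b using Ordinal.induction with
    | h b IHb =>
    have hU : ∀ a, a < omega0 ^ e → b < omega0 ^ (e + 1) → a ♯ b < omega0 ^ e + b := by
      intro a ha hb
      rcases lt_or_ge b (omega0 ^ e) with hsmall | hbig
      · exact (hC a b ha hsmall).trans_le le_self_add
      · set b₁ := b - omega0 ^ e with hb₁def
        have hcancel : omega0 ^ e + b₁ = b := Ordinal.add_sub_cancel_of_le hbig
        have hb₁b : b₁ < b := matula_sub_lt hbig hb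
        have hb₁lt : b₁ < omega0 ^ (e + 1) := hb₁b.trans hb
        have hAb₁ : omega0 ^ e ♯ b₁ = omega0 ^ e + b₁ := (IHb b₁ hb₁b).2 hb₁lt
        have hd : a ♯ b₁ < b := by
          have := (IHb b₁ hb₁b).1 a ha hb₁lt
          rwa [hcancel] at this
        have hdlt : a ♯ b₁ < omega0 ^ (e + 1) := hd.trans hb
        have hAd : omega0 ^ e ♯ (a ♯ b₁) = omega0 ^ e + (a ♯ b₁) :=
          (IHb _ hd).2 hdlt
        calc a ♯ b = a ♯ (omega0 ^ e ♯ b₁) := by rw [hAb₁, hcancel]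
          _ = omega0 ^ e ♯ (a ♯ b₁) := nadd_left_comm _ _ _
          _ = omega0 ^ e + (a ♯ b₁) := hAd
          _ < omega0 ^ e + b := add_lt_add_right hd _
    refine ⟨hU, ?_⟩
    intro hb
    refine le_antisymm ?_ (add_le_nadd _ _)
    rw [nadd_le_iff]
    constructor
    · intro a' ha'
      exact hU a' ha' hb
    · intro b' hb'
      rw [(IHb b' hb').2 (hb'.trans hb)]
      exact add_lt_add_right hb' _
  exact ⟨hC, fun b => (hKey b).2, fun a b ha hb => (hKey b).1 a ha hb⟩

open NaturalOps in
/-- The Matula coding is multiplicative with respect to the Hessenberg natural sum: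
`M (α ♯ β) = M α * M β` for all `α, β < ε₀`. -/
theorem matula_multiplicative (M : Ordinal → ℕ) (hM : IsMatula M) :
    ∀ α β : Ordinal, α < eps0 → β < eps0 → M (α ♯ β) = M α * M β := by
  have hClosE : ∀ α β : Ordinal, α < eps0 → β < eps0 → α ♯ β < eps0 := by
    intro α β hα hβ
    have := (matula_package eps0).1 α β (by rwa [eps0_fixed]) (by rwa [eps0_fixed])
    rwa [eps0_fixed] at this
  -- main induction on the value `α ♯ β`
  suffices h : ∀ v α β : Ordinal, α ♯ β = v → α < eps0 → β < eps0 →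
      M (α ♯ β) = M α * M β by
    intro α β hα hβ; exact h (α ♯ β) α β rfl hα hβ
  intro v
  induction v using Ordinal.induction with
  | h v IHv =>
  -- the "sorted" case
  have key : ∀ α β : Ordinal, α ♯ β = v → α < eps0 → β < eps0 → α ≠ 0 → β ≠ 0 →
      log omega0 β ≤ log omega0 α → M (α ♯ β) = M α * M β := by
    intro α β hv hα hβ hα0 hβ0 hlog
    set e := log omega0 α with he
    have hle : omega0 ^ e ≤ α := opow_log_le_self _ hα0
    have hαlt : α < omega0 ^ (e + 1) := by
      rw [add_one_eq_succ]; exact lt_opow_succ_log_self one_lt_omega0 α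
    have hβlt : β < omega0 ^ (e + 1) := by
      refine (lt_opow_succ_log_self one_lt_omega0 β).trans_le ?_
      rw [← add_one_eq_succ]
      exact opow_le_opow_right omega0_pos (add_le_add_left hlog 1)
    set a := α - omega0 ^ e with ha_def
    have hcancel : omega0 ^ e + a = α := Ordinal.add_sub_cancel_of_le hle
    have haα : a < α := matula_sub_lt hle hαlt
    have halt : a < omega0 ^ (e + 1) := haα.trans hαlt
    have hA : omega0 ^ e ♯ a = omega0 ^ e + a := (matula_package e).2.1 a halt
    have hcomb : a ♯ β < omega0 ^ (e + 1) := by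
      exact (matula_package (e + 1)).1 a β halt hβlt
    have hAc : omega0 ^ e ♯ (a ♯ β) = omega0 ^ e + (a ♯ β) :=
      (matula_package e).2.1 _ hcomb
    have hmain : α ♯ β = omega0 ^ e + (a ♯ β) := by
      calc α ♯ β = (omega0 ^ e ♯ a) ♯ β := by rw [hA, hcancel]
        _ = omega0 ^ e ♯ (a ♯ β) := nadd_assoc _ _ _
        _ = omega0 ^ e + (a ♯ β) := hAc
    have hvlt : α ♯ β < eps0 := hClosE α β hα hβ
    have haε : a < eps0 := haα.trans hα
    have hIH : M (a ♯ β) = M a * M β := by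
      refine IHv (a ♯ β) ?_ a β rfl haε hβ
      rw [← hv]
      exact nadd_lt_nadd_right haα β
    have h1 : M (α ♯ β) = Nat.nth Nat.Prime (M e) * M (a ♯ β) := by
      rw [hmain]
      exact hM.2 e (a ♯ β) (by rw [← hmain]; exact hvlt) hcomb
    have h2 : M α = Nat.nth Nat.Prime (M e) * M a := by
      conv_lhs => rw [← hcancel]
      exact hM.2 e a (by rw [hcancel]; exact hα) halt
    rw [h1, hIH, h2, mul_assoc]
  intro α β hv hα hβ
  rcases eq_or_ne α 0 with rfl | hα0
  · rw [zero_nadd, hM.1, one_mul]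
  rcases eq_or_ne β 0 with rfl | hβ0
  · rw [nadd_zero, hM.1, mul_one]
  rcases le_total (log omega0 β) (log omega0 α) with hlog | hlog
  · exact key α β hv hα hβ hα0 hβ0 hlog
  · rw [nadd_comm] at hv ⊢
    rw [key β α hv hβ hα hβ0 hα0 hlog, mul_comm]
end

section
/- Let r ≥ 0. If L and L' are linear subsets of ω^{r+1}, i.e., L = {ω^r·(a_r + b_r·l_r) + ⋯ + ω^0·(a_0 + b_0·l_0) : l_i ∈ ℕ} and similarly L' with parameters a'_i, b'_i, then L ∩ L' is either empty or again a linear subset of ω^{r+1} of the same shape. -/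
open Ordinal

/-- `N` is the norm function on ordinals below `ε₀`: `N 0 = 0` and
`N (ω^e + b) = 1 + N e + N b` when `ω^e + b` is in Cantor normal form
(i.e. `b < ω^(e+1)`).  Thus `N α` is the number of occurrences of `ω` in the
hereditary Cantor normal form of `α`. -/
def IsNorm (N : Ordinal → ℕ) : Prop :=
  N 0 = 0 ∧
    ∀ e b : Ordinal, omega0 ^ e + b < eps0 → b < omega0 ^ (e + 1) →
      N (omega0 ^ e + b) = 1 + N e + N b

/-- The ordinal `ω^r · k r + ω^{r-1} · k (r-1) + ⋯ + ω^0 · k 0` (terms in decreasing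
order of exponents). -/
noncomputable def ordOf (r : ℕ) (k : ℕ → ℕ) : Ordinal :=
  ((List.range (r + 1)).reverse.map fun i : ℕ => omega0 ^ (i : Ordinal) * ((k i : ℕ) : Ordinal)).foldr
    (· + ·) 0

lemma ordOf_zero (k : ℕ → ℕ) : ordOf 0 k = (k 0 : Ordinal) := by
  simp only [ordOf, List.range_succ, List.range_zero, List.nil_append,
    List.reverse_cons, List.reverse_nil, List.map_cons, List.map_nil,
    List.foldr_cons, List.foldr_nil]
  simp

lemma ordOf_succ (r : ℕ) (k : ℕ → ℕ) :
    ordOf (r + 1) k = omega0 ^ ((r + 1 : ℕ) : Ordinal) * (k (r + 1) : Ordinal) + ordOf r k := by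
  have : List.range (r + 1 + 1) = List.range (r + 1) ++ [r + 1] := List.range_succ
  rw [ordOf, this, List.reverse_append, List.reverse_singleton, List.singleton_append,
    List.map_cons, List.foldr_cons]
  rfl

lemma ordOf_lt (r : ℕ) (k : ℕ → ℕ) : ordOf r k < omega0 ^ ((r : Ordinal) + 1) := by
  induction r with
  | zero =>
      simpa [ordOf_zero] using nat_lt_omega0 (k 0)
  | succ r ih =>
      rw [ordOf_succ]
      have hcast : ((r + 1 : ℕ) : Ordinal) = (r : Ordinal) + 1 := by push_cast; ring
      rw [hcast]
      calc omega0 ^ ((r : Ordinal) + 1) * (k (r+1) : Ordinal) + ordOf r k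
          < omega0 ^ ((r : Ordinal) + 1) * (k (r+1) : Ordinal) + omega0 ^ ((r : Ordinal) + 1) :=
            add_lt_add_right ih _
        _ = omega0 ^ ((r : Ordinal) + 1) * ((k (r+1) : Ordinal) + 1) := by rw [mul_add_one]
        _ ≤ omega0 ^ ((r : Ordinal) + 1) * omega0 := by
            apply mul_le_mul_right
            exact (nat_lt_omega0 (k (r+1) + 1)).le.trans_eq' (by push_cast; ring)
        _ = omega0 ^ ((r : Ordinal) + 1 + 1) := by
            rw [Ordinal.add_one_eq_succ ((r : Ordinal) + 1), opow_succ]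

lemma digit_eq {e : Ordinal} {m m' : ℕ} {x x' : Ordinal} (hx : x < omega0 ^ e)
    (hx' : x' < omega0 ^ e)
    (h : omega0 ^ e * (m : Ordinal) + x = omega0 ^ e * (m' : Ordinal) + x') :
    m = m' ∧ x = x' := by
  have key : ∀ (p q : ℕ) (y y' : Ordinal), y < omega0 ^ e → p < q →
      omega0 ^ e * (p : Ordinal) + y < omega0 ^ e * (q : Ordinal) + y' := by
    intro p q y y' hy hpq
    calc omega0 ^ e * (p : Ordinal) + y
        < omega0 ^ e * (p : Ordinal) + omega0 ^ e := add_lt_add_right hy _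
      _ = omega0 ^ e * ((p : Ordinal) + 1) := (mul_add_one _ _).symm
      _ ≤ omega0 ^ e * (q : Ordinal) := by
          apply mul_le_mul_right
          exact_mod_cast Nat.succ_le_of_lt hpq
      _ ≤ omega0 ^ e * (q : Ordinal) + y' := le_self_add
  have hm : m = m' := by
    rcases lt_trichotomy m m' with h1 | h1 | h1
    · exact absurd h (key m m' x x' hx h1).ne
    · exact h1
    · exact absurd h.symm (key m' m x' x hx' h1).ne
  refine ⟨hm, ?_⟩
  rw [hm] at h
  exact (add_right_inj _).mp h

lemma ordOf_inj {r : ℕ} {k k' : ℕ → ℕ} (h : ordOf r k = ordOf r k') :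
    ∀ i ≤ r, k i = k' i := by
  induction r with
  | zero =>
      intro i hi
      interval_cases i
      rw [ordOf_zero, ordOf_zero] at h
      exact_mod_cast h
  | succ r ih =>
      rw [ordOf_succ, ordOf_succ] at h
      have hcast : ((r + 1 : ℕ) : Ordinal) = (r : Ordinal) + 1 := by push_cast; ring
      rw [hcast] at h
      obtain ⟨h1, h2⟩ := digit_eq (ordOf_lt r k) (ordOf_lt r k') h
      intro i hi
      rcases Nat.lt_or_ge i (r + 1) with h3 | h3
      · exact ih h2 i (Nat.lt_succ_iff.mp h3)
      · have : i = r + 1 := le_antisymm hi h3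
        rwa [this]

lemma ordOf_congr {r : ℕ} {k k' : ℕ → ℕ} (h : ∀ i ≤ r, k i = k' i) :
    ordOf r k = ordOf r k' := by
  induction r with
  | zero => rw [ordOf_zero, ordOf_zero, h 0 le_rfl]
  | succ r ih =>
      rw [ordOf_succ, ordOf_succ, h (r + 1) le_rfl,
        ih fun i hi => h i (hi.trans (Nat.le_succ r))]

lemma nat_ap {a b a' b' c : ℕ}
    (hc : (∃ l, c = a + b * l) ∧ (∃ l, c = a' + b' * l))
    (hmin : ∀ y, ((∃ l, y = a + b * l) ∧ (∃ l, y = a' + b' * l)) → c ≤ y) (x : ℕ) :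
    ((∃ l, x = a + b * l) ∧ (∃ l, x = a' + b' * l)) ↔ ∃ l, x = c + Nat.lcm b b' * l := by
  obtain ⟨⟨m, hm⟩, ⟨m', hm'⟩⟩ := hc
  constructor
  · rintro ⟨⟨l1, hl1⟩, ⟨l1', hl1'⟩⟩
    have hcx : c ≤ x := hmin x ⟨⟨l1, hl1⟩, ⟨l1', hl1'⟩⟩
    have hd : b ∣ x - c := by
      have hle : b * m ≤ b * l1 := by omega
      exact ⟨l1 - m, by rw [Nat.mul_sub]; omega⟩
    have hd' : b' ∣ x - c := by
      have hle : b' * m' ≤ b' * l1' := by omega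
      exact ⟨l1' - m', by rw [Nat.mul_sub]; omega⟩
    obtain ⟨t, ht⟩ := Nat.lcm_dvd hd hd'
    exact ⟨t, by omega⟩
  · rintro ⟨l, hl⟩
    obtain ⟨t, ht⟩ := Nat.dvd_lcm_left b b'
    obtain ⟨t', ht'⟩ := Nat.dvd_lcm_right b b'
    constructor
    · exact ⟨m + t * l, by rw [hl, hm, ht]; ring⟩
    · exact ⟨m' + t' * l, by rw [hl, hm', ht']; ring⟩


/-- The linear subset of `ω^{r+1}` with parameters `a_i, b_i`:
`{ω^r·(a_r + b_r l_r) + ⋯ + ω^0·(a_0 + b_0 l_0) : l_i ∈ ℕ}`. -/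
noncomputable def linSet (r : ℕ) (a b : ℕ → ℕ) : Set Ordinal :=
  {α | ∃ l : ℕ → ℕ, α = ordOf r fun i => a i + b i * l i}

/-- The intersection of two linear subsets of `ω^{r+1}` is empty or again linear. -/
theorem linSet_inter (r : ℕ) (a b a' b' : ℕ → ℕ) :
    linSet r a b ∩ linSet r a' b' = ∅ ∨
      ∃ a'' b'' : ℕ → ℕ, linSet r a b ∩ linSet r a' b' = linSet r a'' b'' := by
  by_cases hne : linSet r a b ∩ linSet r a' b' = ∅
  · exact Or.inl hne
  right
  obtain ⟨α, ⟨l, hl⟩, ⟨l', hl'⟩⟩ := Set.nonempty_iff_ne_empty.mpr hne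
  set S : ℕ → Set ℕ := fun i =>
    {x | (∃ m, x = a i + b i * m) ∧ (∃ m, x = a' i + b' i * m)} with hS
  have hmem : ∀ i ≤ r, a i + b i * l i ∈ S i := by
    intro i hi
    have := ordOf_inj (hl ▸ hl') i hi
    exact ⟨⟨l i, rfl⟩, ⟨l' i, this⟩⟩
  refine ⟨fun i => sInf (S i), fun i => Nat.lcm (b i) (b' i), ?_⟩
  have hiff : ∀ i ≤ r, ∀ x : ℕ, x ∈ S i ↔ ∃ m, x = sInf (S i) + Nat.lcm (b i) (b' i) * m := by
    intro i hi x
    have hne' : (S i).Nonempty := ⟨_, hmem i hi⟩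
    exact nat_ap (Nat.sInf_mem hne') (fun y hy => Nat.sInf_le hy) x
  ext β
  constructor
  · rintro ⟨⟨u, hu⟩, ⟨u', hu'⟩⟩
    have heq : ∀ i ≤ r, a i + b i * u i = a' i + b' i * u' i :=
      ordOf_inj (hu ▸ hu')
    have hch : ∀ i ≤ r, ∃ m, a i + b i * u i = sInf (S i) + Nat.lcm (b i) (b' i) * m := by
      intro i hi
      exact (hiff i hi _).mp ⟨⟨u i, rfl⟩, ⟨u' i, heq i hi⟩⟩
    refine ⟨fun i => if h : i ≤ r then Classical.choose (hch i h) else 0, ?_⟩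
    rw [hu]
    refine ordOf_congr fun i hi => ?_
    simp only [dif_pos hi]
    exact Classical.choose_spec (hch i hi)
  · rintro ⟨v, hv⟩
    have hSv : ∀ i ≤ r, sInf (S i) + Nat.lcm (b i) (b' i) * v i ∈ S i := by
      intro i hi
      exact (hiff i hi _).mpr ⟨v i, rfl⟩
    constructor
    · refine ⟨fun i => if h : i ≤ r then Classical.choose (hSv i h).1 else 0, ?_⟩
      rw [hv]
      refine ordOf_congr fun i hi => ?_
      simp only [dif_pos hi]
      exact Classical.choose_spec (hSv i hi).1
    · refine ⟨fun i => if h : i ≤ r then Classical.choose (hSv i h).2 else 0, ?_⟩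
      rw [hv]
      refine ordOf_congr fun i hi => ?_
      simp only [dif_pos hi]
      exact Classical.choose_spec (hSv i hi).2
end

section
/- Schur's Tauberian theorem: let T(x) = ∑ tₙxⁿ have nonnegative coefficients with tₙ > 0 eventually and lim_{n→∞} tₙ/t_{n+1} = ρ ≥ 0, and let S(x) = ∑ sₙxⁿ have radius of convergence strictly greater than ρ. Then lim_{n→∞} ([xⁿ](S·T)) / ([xⁿ]T) = S(ρ). -/
open Filter in
/-- Schur's Tauberian theorem: if `T(x) = ∑ tₙ xⁿ` has nonnegative coefficients which are
eventually positive and satisfy `tₙ/t_{n+1} → ρ ≥ 0`, and `S(x) = ∑ sₙ xⁿ` has radius of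
convergence strictly greater than `ρ`, then `[xⁿ](S·T) / [xⁿ]T → S(ρ)`. -/
theorem schur_tauberian (ρ : ℝ) (hρ : 0 ≤ ρ) (t s : ℕ → ℝ)
    (ht0 : ∀ n, 0 ≤ t n) (htpos : ∀ᶠ n in atTop, 0 < t n)
    (hratio : Tendsto (fun n => t n / t (n + 1)) atTop (nhds ρ))
    (hS : ∃ x : ℝ, ρ < x ∧ Summable (fun n => |s n| * x ^ n)) :
    Tendsto
      (fun n : ℕ => (∑ k ∈ Finset.range (n + 1), s k * t (n - k)) / t n) atTop
      (nhds (∑' n : ℕ, s n * ρ ^ n)) := by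
  obtain ⟨x, hx, hsum⟩ := hS
  set r : ℝ := (ρ + x) / 2 with hr_def
  have hρr : ρ < r := by rw [hr_def]; linarith
  have hrx : r < x := by rw [hr_def]; linarith
  have hr0 : 0 < r := lt_of_le_of_lt hρ hρr
  -- choose N
  have hev : ∀ᶠ n in atTop, 0 < t n ∧ t n / t (n + 1) < r :=
    htpos.and (hratio.eventually (eventually_lt_nhds hρr))
  obtain ⟨N, hN⟩ := eventually_atTop.mp hev
  have htN : ∀ j, N ≤ j → 0 < t j := fun j hj => (hN j hj).1
  have hstep : ∀ j, N ≤ j → t j ≤ r * t (j + 1) := by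
    intro j hj
    have h1 := (hN j hj).2
    have h2 : 0 < t (j + 1) := htN _ (le_trans hj (Nat.le_succ j))
    rw [div_lt_iff₀ h2] at h1
    linarith
  -- Step 1
  have step1 : ∀ d : ℕ, ∀ a : ℕ, N ≤ a → t a ≤ r ^ d * t (a + d) := by
    intro d
    induction d with
    | zero => intro a _; simp
    | succ d ih =>
      intro a ha
      have h1 := ih a ha
      have h2 := hstep (a + d) (le_trans ha (Nat.le_add_right a d))
      calc t a ≤ r ^ d * t (a + d) := h1
        _ ≤ r ^ d * (r * t (a + d + 1)) := by
            apply mul_le_mul_of_nonneg_left h2 (by positivity)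
        _ = r ^ (d + 1) * t (a + (d + 1)) := by ring_nf
  set M : ℝ := ∑ j ∈ Finset.range (N + 1), t j with hM_def
  have hM : ∀ j, j ≤ N → t j ≤ M := by
    intro j hj
    apply Finset.single_le_sum (f := t) (fun i _ => ht0 i)
    simp [Nat.lt_succ_iff, hj]
  have hM0 : 0 ≤ M := Finset.sum_nonneg fun i _ => ht0 i
  set c0 : ℝ := (max 1 r⁻¹) ^ N with hc0_def
  set C : ℝ := max 1 (M * c0 / t N) with hC_def
  have hC1 : (1 : ℝ) ≤ C := le_max_left _ _
  have hC0 : 0 ≤ C := le_trans zero_le_one hC1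
  -- key bound
  have lemA : ∀ m, N ≤ m → ∀ k, k ≤ m → t (m - k) ≤ C * r ^ k * t m := by
    intro m hm k hk
    by_cases hcase : N ≤ m - k
    · have h1 := step1 k (m - k) hcase
      rw [Nat.sub_add_cancel hk] at h1
      calc t (m - k) ≤ r ^ k * t m := h1
        _ = 1 * (r ^ k * t m) := by ring
        _ ≤ C * (r ^ k * t m) := by
            exact mul_le_mul_of_nonneg_right hC1
              (mul_nonneg (pow_nonneg hr0.le k) (ht0 m))
        _ = C * r ^ k * t m := by ring
    · push_neg at hcase
      have hmk : m - k ≤ N := hcase.le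
      have h1 : t (m - k) ≤ M := hM _ hmk
      have h2 : t N ≤ r ^ (m - N) * t m := by
        have := step1 (m - N) N le_rfl
        rwa [Nat.add_sub_cancel' hm] at this
      -- r ^ (m - N) ≤ c0 * r ^ k
      have hkmN : m - N ≤ k := by omega
      have hdN : k - (m - N) ≤ N := by omega
      have hkey : r ^ (m - N) ≤ c0 * r ^ k := by
        have hkk : k = (m - N) + (k - (m - N)) := by omega
        rw [hkk, pow_add]
        set d := k - (m - N)
        have hb1 : (1 : ℝ) ≤ max 1 r⁻¹ := le_max_left _ _
        have hb2 : (max 1 r⁻¹) ^ d ≤ c0 := pow_le_pow_right₀ hb1 hdN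
        have hb3 : (1 : ℝ) ≤ (max 1 r⁻¹) ^ d * r ^ d := by
          have : (r⁻¹ : ℝ) ^ d ≤ (max 1 r⁻¹) ^ d :=
            pow_le_pow_left₀ (by positivity) (le_max_right _ _) d
          have h4 : (r⁻¹ : ℝ) ^ d * r ^ d = 1 := by
            rw [← mul_pow, inv_mul_cancel₀ hr0.ne', one_pow]
          calc (1:ℝ) = r⁻¹ ^ d * r ^ d := h4.symm
            _ ≤ (max 1 r⁻¹) ^ d * r ^ d :=
                mul_le_mul_of_nonneg_right this (pow_nonneg hr0.le d)
        calc r ^ (m - N) = r ^ (m - N) * 1 := by ring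
          _ ≤ r ^ (m - N) * ((max 1 r⁻¹) ^ d * r ^ d) :=
              mul_le_mul_of_nonneg_left hb3 (pow_nonneg hr0.le (m - N))
          _ ≤ r ^ (m - N) * (c0 * r ^ d) :=
              mul_le_mul_of_nonneg_left
                (mul_le_mul_of_nonneg_right hb2 (pow_nonneg hr0.le d))
                (pow_nonneg hr0.le (m - N))
          _ = c0 * (r ^ (m - N) * r ^ d) := by ring
      have htNpos : 0 < t N := htN N le_rfl
      have h3 : M ≤ (M / t N) * (r ^ (m - N) * t m) := by
        have := mul_le_mul_of_nonneg_left h2 (div_nonneg hM0 htNpos.le)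
        calc M = (M / t N) * t N := by field_simp
          _ ≤ (M / t N) * (r ^ (m - N) * t m) := this
      have h4 : (M / t N) * (r ^ (m - N) * t m) ≤ (M * c0 / t N) * (r ^ k * t m) := by
        have hMN : 0 ≤ M / t N := div_nonneg hM0 htNpos.le
        have := mul_le_mul_of_nonneg_right hkey (ht0 m)
        calc (M / t N) * (r ^ (m - N) * t m) ≤ (M / t N) * (c0 * r ^ k * t m) :=
              mul_le_mul_of_nonneg_left this hMN
          _ = (M * c0 / t N) * (r ^ k * t m) := by ring
      have h5 : (M * c0 / t N) * (r ^ k * t m) ≤ C * (r ^ k * t m) := by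
        have h6 : M * c0 / t N ≤ C := le_max_right _ _
        exact mul_le_mul_of_nonneg_right h6
          (mul_nonneg (pow_nonneg hr0.le k) (ht0 m))
      calc t (m - k) ≤ M := h1
        _ ≤ (M / t N) * (r ^ (m - N) * t m) := h3
        _ ≤ (M * c0 / t N) * (r ^ k * t m) := h4
        _ ≤ C * (r ^ k * t m) := h5
        _ = C * r ^ k * t m := by ring
  -- ratio limit
  have lemB : ∀ k : ℕ, Tendsto (fun n => t n / t (n + k)) atTop (nhds (ρ ^ k)) := by
    intro k
    induction k with
    | zero =>
      simp only [pow_zero]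
      apply Tendsto.congr' _ (tendsto_const_nhds : Tendsto (fun _ : ℕ => (1:ℝ)) atTop (nhds 1))
      filter_upwards [htpos] with n hn
      simp [div_self hn.ne']
    | succ k ih =>
      have h2 : Tendsto (fun n => t (n + 1) / t (n + 1 + k)) atTop (nhds (ρ ^ k)) :=
        ih.comp (tendsto_add_atTop_nat 1)
      have h3 := hratio.mul h2
      rw [show ρ * ρ ^ k = ρ ^ (k + 1) by ring] at h3
      apply Tendsto.congr' _ h3
      filter_upwards [eventually_ge_atTop N] with n hn
      have hpos : t (n + 1) ≠ 0 := (htN (n + 1) (by omega)).ne'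
      have : n + 1 + k = n + (k + 1) := by omega
      rw [this]
      field_simp
  -- the doubly-indexed family
  set f : ℕ → ℕ → ℝ := fun n k => if k ≤ n then s k * (t (n - k) / t n) else 0 with hf_def
  have hfin : ∀ n, (∑' k, f n k) = (∑ k ∈ Finset.range (n + 1), s k * t (n - k)) / t n := by
    intro n
    rw [tsum_eq_sum (s := Finset.range (n + 1))
      (by intro k hk; simp only [Finset.mem_range, not_lt] at hk
          simp only [hf_def]; rw [if_neg (by omega)])]
    rw [Finset.sum_div]
    apply Finset.sum_congr rfl
    intro k hk
    simp only [Finset.mem_range, Nat.lt_succ_iff] at hk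
    simp only [hf_def]
    rw [if_pos hk, mul_div_assoc]
  -- pointwise convergence
  have hpt : ∀ k : ℕ, Tendsto (fun n => f n k) atTop (nhds (s k * ρ ^ k)) := by
    intro k
    have h1 : Tendsto (fun n : ℕ => s k * (t (n - k) / t (n - k + k))) atTop
        (nhds (s k * ρ ^ k)) :=
      ((lemB k).comp (tendsto_sub_atTop_nat k)).const_mul (s k)
    apply Tendsto.congr' _ h1
    filter_upwards [eventually_ge_atTop k] with n hn
    simp only [hf_def]
    rw [if_pos hn, Nat.sub_add_cancel hn]
  -- summable bound
  have hbd_sum : Summable (fun k => C * (|s k| * x ^ k)) := hsum.mul_left C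
  have h_bound : ∀ᶠ n in atTop, ∀ k, ‖f n k‖ ≤ C * (|s k| * x ^ k) := by
    filter_upwards [eventually_ge_atTop N] with n hn k
    have hx0 : 0 < x := lt_of_le_of_lt hρ hx
    by_cases hk : k ≤ n
    · simp only [hf_def, if_pos hk]
      have htn : 0 < t n := htN n hn
      have hdiv : t (n - k) / t n ≤ C * r ^ k := by
        rw [div_le_iff₀ htn]
        exact lemA n hn k hk
      have hdiv0 : 0 ≤ t (n - k) / t n := div_nonneg (ht0 _) (ht0 _)
      rw [Real.norm_eq_abs, abs_mul, abs_of_nonneg hdiv0]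
      have hrk : r ^ k ≤ x ^ k := pow_le_pow_left₀ hr0.le hrx.le k
      calc |s k| * (t (n - k) / t n) ≤ |s k| * (C * r ^ k) :=
            mul_le_mul_of_nonneg_left hdiv (abs_nonneg _)
        _ = C * (|s k| * r ^ k) := by ring
        _ ≤ C * (|s k| * x ^ k) :=
            mul_le_mul_of_nonneg_left
              (mul_le_mul_of_nonneg_left hrk (abs_nonneg _)) hC0
    · simp only [hf_def, if_neg hk, norm_zero]
      positivity
  have hmain := tendsto_tsum_of_dominated_convergence hbd_sum hpt h_bound
  exact hmain.congr hfin
end
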